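/- Near the origin the rotated subsolution matches U to order 2α: for v_R(x,z) = V_R(R − √(|x'|²+(x_n−R)²), z), there exists C such that |v_R(x,z) − U(x_n,z)| ≤ C s^{2α} for all (x,z) ∈ B_s with s small, so v_R(x,z) = U(x_n,z) + o(|(x,z)|^α) as (x,z) → 0. -/

import Mathlib

noncomputable def hh (t z : ℝ) : ℝ :=
  Real.sqrt (Real.sqrt (t ^ 2 + z ^ 2)) * Real.cos (Complex.arg (t + z * Complex.I) / 2)

noncomputable def UU (α t z : ℝ) : ℝ := hh t z ^ (2 * α)

noncomputable def VV (α : ℝ) (n : ℕ) (R t z : ℝ) : ℝ :=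
  UU α t z * (((n : ℝ) - 1) * t / R + 1)

/-- `v_R(X) = V_R(R - √(|x'|² + (x_n - R)²), z)` with `X = (x', x_n, z)`. -/
noncomputable def vR (α : ℝ) (m : ℕ) (R : ℝ) (p : (Fin m → ℝ) × ℝ × ℝ) : ℝ :=
  VV α (m + 1) R (R - Real.sqrt ((∑ i, p.1 i ^ 2) + (p.2.1 - R) ^ 2)) p.2.2

lemma hh_nonneg (t z : ℝ) : 0 ≤ hh t z := by
  apply mul_nonneg (Real.sqrt_nonneg _)
  apply Real.cos_nonneg_of_mem_Icc
  constructor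
  · nlinarith [Complex.neg_pi_lt_arg (t + z * Complex.I), Real.pi_pos]
  · nlinarith [Complex.arg_le_pi (t + z * Complex.I), Real.pi_pos]

lemma abs_complex (t z : ℝ) : ‖(t + z * Complex.I : ℂ)‖ = Real.sqrt (t ^ 2 + z ^ 2) := by
  rw [Complex.norm_def, Complex.normSq_apply]
  norm_num [pow_two]

lemma hh_sq (t z : ℝ) : hh t z ^ 2 = (Real.sqrt (t ^ 2 + z ^ 2) + t) / 2 := by
  by_cases h0 : (t + z * Complex.I : ℂ) = 0
  · have ht : t = 0 := by
      have := congrArg Complex.re h0; simpa using this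
    have hz : z = 0 := by
      have := congrArg Complex.im h0; simpa using this
    simp [hh, ht, hz]
  · have habs : ‖(t + z * Complex.I : ℂ)‖ = Real.sqrt (t ^ 2 + z ^ 2) := abs_complex t z
    have hre : Real.cos (Complex.arg (t + z * Complex.I)) =
        t / Real.sqrt (t ^ 2 + z ^ 2) := by
      rw [Complex.cos_arg h0, habs]; simp
    have hcos2 : Real.cos (Complex.arg (t + z * Complex.I) / 2) ^ 2 =
        (1 + Real.cos (Complex.arg (t + z * Complex.I))) / 2 := by
      rw [Real.cos_half (Complex.neg_pi_lt_arg _).le (Complex.arg_le_pi _),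
        Real.sq_sqrt (by linarith [Real.neg_one_le_cos (Complex.arg (t + z * Complex.I))])]
    have hs : (0:ℝ) < Real.sqrt (t ^ 2 + z ^ 2) := by
      rw [← habs]; exact norm_pos_iff.mpr h0
    have hsq : Real.sqrt (Real.sqrt (t ^ 2 + z ^ 2)) ^ 2 = Real.sqrt (t ^ 2 + z ^ 2) :=
      Real.sq_sqrt hs.le
    rw [hh, mul_pow, hsq, hcos2, hre]
    field_simp

lemma UU_eq (α t z : ℝ) : UU α t z = ((Real.sqrt (t ^ 2 + z ^ 2) + t) / 2) ^ α := by
  rw [UU, mul_comm 2 α, mul_comm α 2, Real.rpow_mul (hh_nonneg t z), ← hh_sq t z,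
    ← Real.rpow_natCast (hh t z) 2]
  norm_num

lemma gg_nonneg (t z : ℝ) : 0 ≤ (Real.sqrt (t ^ 2 + z ^ 2) + t) / 2 := by
  have h1 : |t| ≤ Real.sqrt (t ^ 2 + z ^ 2) := by
    rw [← Real.sqrt_sq_eq_abs]
    exact Real.sqrt_le_sqrt (by nlinarith)
  have := abs_nonneg t
  have := neg_abs_le t
  linarith

lemma sqrt_lip (t x z : ℝ) :
    |Real.sqrt (t ^ 2 + z ^ 2) - Real.sqrt (x ^ 2 + z ^ 2)| ≤ |t - x| := by
  have h := abs_norm_sub_norm_le (t + z * Complex.I) (x + z * Complex.I)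
  have h2 : (t + z * Complex.I) - (x + z * Complex.I) = ((t - x : ℝ) : ℂ) := by
    push_cast; ring
  rw [h2] at h
  simp only [Complex.norm_real, Real.norm_eq_abs, abs_complex] at h
  exact h

/-- Hölder: `|a^p - b^p| ≤ |a-b|^p` for `a,b ≥ 0`, `0 ≤ p ≤ 1`. -/
lemma abs_rpow_sub_rpow_le (a b p : ℝ) (ha : 0 ≤ a) (hb : 0 ≤ b)
    (hp0 : 0 ≤ p) (hp1 : p ≤ 1) : |a ^ p - b ^ p| ≤ |a - b| ^ p := by
  have key : ∀ x y : ℝ, 0 ≤ x → 0 ≤ y → y ≤ x → x ^ p - y ^ p ≤ (x - y) ^ p := by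
    intro x y hx hy hxy
    have h := NNReal.rpow_add_le_add_rpow ((x - y).toNNReal) (y.toNNReal) hp0 hp1
    have e1 : ((x - y).toNNReal : ℝ) = x - y := Real.coe_toNNReal _ (by linarith)
    have e2 : ((y).toNNReal : ℝ) = y := Real.coe_toNNReal _ hy
    have h' := NNReal.coe_le_coe.2 h
    simp only [NNReal.coe_add, NNReal.coe_rpow, e1, e2] at h'
    have hxx : x - y + y = x := by ring
    rw [hxx] at h'
    linarith
  rcases le_total b a with hba | hab
  · have h1 : b ^ p ≤ a ^ p := Real.rpow_le_rpow hb hba hp0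
    rw [abs_of_nonneg (by linarith), abs_of_nonneg (by linarith)]
    exact key a b ha hb hba
  · have h1 : a ^ p ≤ b ^ p := Real.rpow_le_rpow ha hab hp0
    rw [abs_of_nonpos (by linarith), abs_of_nonpos (by linarith), neg_sub, neg_sub]
    exact key b a hb ha hab

set_option maxHeartbeats 1000000 in
/-- Near the origin `v_R` matches `U(x_n, z)` to order `2α`:
`|v_R(x,z) - U(x_n,z)| ≤ C s^{2α}` in `B_s` for `s` small. -/
theorem stmt_17 (m : ℕ) (α R : ℝ) (hα : α ∈ Set.Ioo (0 : ℝ) 1) (hR : 1 ≤ R) :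
    ∃ C > 0, ∃ s₀ > 0, ∀ s : ℝ, 0 < s → s ≤ s₀ →
      ∀ p : (Fin m → ℝ) × ℝ × ℝ,
        (∑ i, p.1 i ^ 2) + p.2.1 ^ 2 + p.2.2 ^ 2 < s ^ 2 →
        |vR α m R p - UU α p.2.1 p.2.2| ≤ C * s ^ (2 * α) := by
  obtain ⟨hα0, hα1⟩ := hα
  refine ⟨6 * m + 7, by positivity, 1/2, by norm_num, ?_⟩
  intro s hs hs2 p hp
  obtain ⟨x, xn, z⟩ := p
  simp only at hp ⊢
  set S : ℝ := ∑ i, x i ^ 2 with hS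
  have hS0 : 0 ≤ S := Finset.sum_nonneg fun i _ => sq_nonneg _
  have hxn : |xn| < s := by
    rw [abs_lt]; constructor <;> nlinarith [sq_nonneg z]
  have hz : |z| < s := by
    rw [abs_lt]; constructor <;> nlinarith [sq_nonneg xn]
  have hSs : S < s ^ 2 := by nlinarith [sq_nonneg xn, sq_nonneg z]
  set t : ℝ := R - Real.sqrt (S + (xn - R) ^ 2) with ht
  have hRxn : 1/2 ≤ R - xn := by
    have : xn < s := (abs_lt.1 hxn).2
    linarith
  -- t ≤ xn
  have h1 : R - xn ≤ Real.sqrt (S + (xn - R) ^ 2) := by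
    rw [show (S + (xn - R)^2 : ℝ) = (R - xn)^2 + S by ring]
    nlinarith [Real.sq_sqrt (show (0:ℝ) ≤ (R - xn)^2 + S by positivity),
      Real.sqrt_nonneg ((R - xn)^2 + S)]
  -- t ≥ xn - s²
  have h2 : Real.sqrt (S + (xn - R) ^ 2) ≤ R - xn + s ^ 2 := by
    have hle : S + (xn - R) ^ 2 ≤ (R - xn + s ^ 2) ^ 2 := by nlinarith [sq_nonneg (s^2)]
    calc Real.sqrt (S + (xn - R) ^ 2) ≤ Real.sqrt ((R - xn + s ^ 2) ^ 2) :=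
          Real.sqrt_le_sqrt hle
      _ = R - xn + s ^ 2 := Real.sqrt_sq (by nlinarith)
  have htxn : |t - xn| ≤ s ^ 2 := by
    rw [abs_le]; constructor <;> [skip; skip] <;> simp only [ht] <;> [linarith; linarith]
  have hss : s ^ 2 ≤ s := by nlinarith
  have htb : |t| ≤ 2 * s := by
    have : |t| ≤ |xn| + |t - xn| := by
      have := abs_add_le xn (t - xn); simpa using this.trans_eq' (by ring_nf)
    nlinarith [abs_le.1 htxn]
  -- rewrite vR as VV at t
  have hvR : vR α m R (x, xn, z) = VV α (m + 1) R t z := by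
    simp [vR, ht, hS]
  set g : ℝ → ℝ := fun u => (Real.sqrt (u ^ 2 + z ^ 2) + u) / 2 with hg
  have hgt0 : 0 ≤ g t := gg_nonneg t z
  have hgx0 : 0 ≤ g xn := gg_nonneg xn z
  have hUt : UU α t z = g t ^ α := UU_eq α t z
  have hUx : UU α xn z = g xn ^ α := UU_eq α xn z
  -- bound on g t
  have hgt3 : g t ≤ 3 * s := by
    have h5 : Real.sqrt (t ^ 2 + z ^ 2) ≤ 3 * s := by
      calc Real.sqrt (t ^ 2 + z ^ 2) ≤ Real.sqrt ((3 * s) ^ 2) := by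
            apply Real.sqrt_le_sqrt
            have ht2 : t ^ 2 ≤ (2 * s) ^ 2 := by
              rw [← sq_abs t]; exact pow_le_pow_left₀ (abs_nonneg t) htb 2
            have hz2 : z ^ 2 ≤ s ^ 2 := by
              rw [← sq_abs z]; exact pow_le_pow_left₀ (abs_nonneg z) hz.le 2
            nlinarith
        _ = 3 * s := Real.sqrt_sq (by linarith)
    have h6 : t ≤ Real.sqrt (t ^ 2 + z ^ 2) := by
      have := gg_nonneg t z
      have h7 : |t| ≤ Real.sqrt (t ^ 2 + z ^ 2) := by
        rw [← Real.sqrt_sq_eq_abs]; exact Real.sqrt_le_sqrt (by nlinarith)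
      linarith [le_abs_self t]
    simp only [hg]
    linarith
  have hUtb : UU α t z ≤ 3 * s ^ α := by
    rw [hUt]
    calc g t ^ α ≤ (3 * s) ^ α := Real.rpow_le_rpow hgt0 hgt3 hα0.le
      _ = 3 ^ α * s ^ α := Real.mul_rpow (by norm_num) hs.le
      _ ≤ 3 * s ^ α := by
          have h3 : (3:ℝ) ^ α ≤ 3 ^ (1:ℝ) :=
            Real.rpow_le_rpow_of_exponent_le (by norm_num) hα1.le
          have hsp : (0:ℝ) ≤ s ^ α := Real.rpow_nonneg hs.le α
          nlinarith [h3, Real.rpow_one (3:ℝ)]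
  have hUt0 : 0 ≤ UU α t z := by rw [hUt]; exact Real.rpow_nonneg hgt0 α
  -- first piece : |VV - UU t z|
  have hfirst : |VV α (m + 1) R t z - UU α t z| ≤ 6 * m * s ^ (2 * α) := by
    have hfactor : VV α (m + 1) R t z - UU α t z = UU α t z * ((m : ℝ) * t / R) := by
      simp only [VV]
      push_cast
      ring
    rw [hfactor, abs_mul, abs_of_nonneg hUt0, abs_div, abs_of_nonneg (by linarith : (0:ℝ) ≤ R),
      abs_mul, Nat.abs_cast]
    have hdiv : (m : ℝ) * |t| / R ≤ (m : ℝ) * (2 * s) := by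
      have h8 : (m : ℝ) * |t| / R ≤ (m : ℝ) * |t| := by
        apply div_le_self (by positivity) hR
      have h9 : (m : ℝ) * |t| ≤ (m : ℝ) * (2 * s) := by
        apply mul_le_mul_of_nonneg_left htb (by positivity)
      linarith
    calc UU α t z * ((m : ℝ) * |t| / R) ≤ (3 * s ^ α) * ((m : ℝ) * (2 * s)) := by
          apply mul_le_mul hUtb hdiv (by positivity) (by positivity)
      _ = 6 * m * (s ^ α * s) := by ring
      _ = 6 * m * s ^ (α + 1) := by rw [Real.rpow_add_one hs.ne' α]
      _ ≤ 6 * m * s ^ (2 * α) := by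
          apply mul_le_mul_of_nonneg_left _ (by positivity)
          apply Real.rpow_le_rpow_of_exponent_ge hs (by linarith) (by linarith)
  -- second piece : |UU t z - UU xn z|
  have hsecond : |UU α t z - UU α xn z| ≤ s ^ (2 * α) := by
    rw [hUt, hUx]
    have hglip : |g t - g xn| ≤ s ^ 2 := by
      have := sqrt_lip t xn z
      have habs : |g t - g xn| ≤ (|Real.sqrt (t ^ 2 + z ^ 2) - Real.sqrt (xn ^ 2 + z ^ 2)|
          + |t - xn|) / 2 := by
        simp only [hg]
        rw [show (Real.sqrt (t ^ 2 + z ^ 2) + t) / 2 - (Real.sqrt (xn ^ 2 + z ^ 2) + xn) / 2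
          = ((Real.sqrt (t ^ 2 + z ^ 2) - Real.sqrt (xn ^ 2 + z ^ 2)) + (t - xn)) / 2 by ring,
          abs_div]
        have := abs_add_le (Real.sqrt (t ^ 2 + z ^ 2) - Real.sqrt (xn ^ 2 + z ^ 2)) (t - xn)
        rw [abs_of_nonneg (by norm_num : (0:ℝ) ≤ (2:ℝ))]
        linarith
      linarith
    calc |g t ^ α - g xn ^ α| ≤ |g t - g xn| ^ α :=
          abs_rpow_sub_rpow_le _ _ _ hgt0 hgx0 hα0.le hα1.le
      _ ≤ (s ^ 2) ^ α := Real.rpow_le_rpow (abs_nonneg _) hglip hα0.le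
      _ = s ^ (2 * α) := by
          rw [Real.rpow_mul hs.le, Real.rpow_two]
  -- combine
  have hsa : 0 ≤ s ^ (2 * α) := Real.rpow_nonneg hs.le _
  calc |vR α m R (x, xn, z) - UU α xn z|
      ≤ |VV α (m + 1) R t z - UU α t z| + |UU α t z - UU α xn z| := by
        rw [hvR]
        have := abs_sub_abs_le_abs_sub (VV α (m + 1) R t z) (UU α xn z)
        calc |VV α (m + 1) R t z - UU α xn z|
            = |(VV α (m + 1) R t z - UU α t z) + (UU α t z - UU α xn z)| := by ring_nf
          _ ≤ _ := abs_add_le _ _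
    _ ≤ 6 * m * s ^ (2 * α) + s ^ (2 * α) := add_le_add hfirst hsecond
    _ ≤ (6 * m + 7) * s ^ (2 * α) := by nlinarith [hsa]
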